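/- arXiv:1701.05277 — 4 statements merged into one kernel-verified Lean document; each statement's English description precedes it below -/
import Mathlib

section
/- Let n ≥ 2 and let λ = (2, 1, 1, …, 1) be the partition of n with λ_1 = 2 and all other parts 1, with complementary pair (w1, w2) corresponding to λ. Then R(w2) has exactly n elements, the n columns of the real Specht matrix are pairwise distinct and affinely independent, and the Specht polytope P(λ) is an (n−1)-dimensional simplex (a convex hull of n affinely independent points, of affine dimension n−1). -/
/-- The action of a permutation on a word: `σ · w = w ∘ σ⁻¹`. -/
def wact {n : ℕ} (σ : Equiv.Perm (Fin n)) (w : Fin n → ℕ) : Fin n → ℕ :=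
  w ∘ σ.symm

/-- `r` is a rearrangement of `w`. -/
def IsRearr {n : ℕ} (w r : Fin n → ℕ) : Prop :=
  ∃ σ : Equiv.Perm (Fin n), wact σ w = r

/-- The type of rearrangements of a word `w`. -/
abbrev Rearr {n : ℕ} (w : Fin n → ℕ) : Type :=
  {r : Fin n → ℕ // IsRearr w r}

theorem wact_wact {n : ℕ} (σ τ : Equiv.Perm (Fin n)) (w : Fin n → ℕ) :
    wact σ (wact τ w) = wact (σ * τ) w := rfl

/-- The action of a permutation on the type of rearrangements of `w`. -/
def ract {n : ℕ} {w : Fin n → ℕ} (σ : Equiv.Perm (Fin n)) (r : Rearr w) : Rearr w :=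
  ⟨wact σ r.1, by
    obtain ⟨τ, hτ⟩ := r.2
    exact ⟨σ * τ, by rw [← hτ, wact_wact]⟩⟩

instance {n : ℕ} (w : Fin n → ℕ) : Finite (Rearr w) :=
  Finite.of_surjective (fun σ : Equiv.Perm (Fin n) => (⟨wact σ w, σ, rfl⟩ : Rearr w))
    (fun r => by obtain ⟨r, σ, hσ⟩ := r; exact ⟨σ, Subtype.ext hσ⟩)

noncomputable instance {n : ℕ} (w : Fin n → ℕ) : Fintype (Rearr w) :=
  Fintype.ofFinite _

/-- Young's character `Y(r1, r2) = Σ sign σ` over all `σ` with `σ·w1 = r1` and `σ·w2 = r2`. -/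
def youngChar {n : ℕ} (w1 w2 : Fin n → ℕ) (r1 r2 : Fin n → ℕ) : ℤ :=
  ∑ σ : Equiv.Perm (Fin n),
    if wact σ w1 = r1 ∧ wact σ w2 = r2 then (Equiv.Perm.sign σ : ℤ) else 0

/-- A pair of words has trivial (diagonal) stabilizer. -/
def FreePair {n : ℕ} (p : (Fin n → ℕ) × (Fin n → ℕ)) : Prop :=
  ∀ σ : Equiv.Perm (Fin n), wact σ p.1 = p.1 → wact σ p.2 = p.2 → σ = 1

/-- The diagonal action on `R(w1) × R(w2)` has exactly one free orbit. -/
def HaveComplRearr {n : ℕ} (w1 w2 : Fin n → ℕ) : Prop :=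
  (∃ p : (Fin n → ℕ) × (Fin n → ℕ), IsRearr w1 p.1 ∧ IsRearr w2 p.2 ∧ FreePair p) ∧
  ∀ p q : (Fin n → ℕ) × (Fin n → ℕ),
    IsRearr w1 p.1 → IsRearr w2 p.2 → FreePair p →
    IsRearr w1 q.1 → IsRearr w2 q.2 → FreePair q →
    ∃ σ : Equiv.Perm (Fin n), wact σ p.1 = q.1 ∧ wact σ p.2 = q.2

/-- `w1, w2` are complementary: there is a unique free orbit and `(w1, w2)` lies in it. -/
def Complementary {n : ℕ} (w1 w2 : Fin n → ℕ) : Prop :=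
  HaveComplRearr w1 w2 ∧ FreePair (w1, w2)

/-- A column of the Specht matrix, as a complex vector indexed by `R(w1)`. -/
noncomputable def spechtCol {n : ℕ} (w1 w2 : Fin n → ℕ) (r2 : Rearr w2) : Rearr w1 → ℂ :=
  fun r1 => (youngChar w1 w2 r1.1 r2.1 : ℂ)

/-- The Specht module: the span of the columns of the Specht matrix. -/
noncomputable def SpechtModule {n : ℕ} (w1 w2 : Fin n → ℕ) : Submodule ℂ (Rearr w1 → ℂ) :=
  Submodule.span ℂ (Set.range (spechtCol w1 w2))

/-- A column of the real Specht matrix. -/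
noncomputable def spechtColR {n : ℕ} (w1 w2 : Fin n → ℕ) (r2 : Rearr w2) : Rearr w1 → ℝ :=
  fun r1 => (youngChar w1 w2 r1.1 r2.1 : ℝ)

/-- The Specht polytope: the convex hull of the columns of the real Specht matrix. -/
noncomputable def SpechtPolytope {n : ℕ} (w1 w2 : Fin n → ℕ) : Set (Rearr w1 → ℝ) :=
  convexHull ℝ (Set.range (spechtColR w1 w2))

/-- The `S_n`-action on complex-valued functions on `R(w)`: `(σ·f)(r) = f(σ⁻¹·r)`. -/
def factC {n : ℕ} {w : Fin n → ℕ} (σ : Equiv.Perm (Fin n)) (f : Rearr w → ℂ) :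
    Rearr w → ℂ :=
  fun r => f (ract σ⁻¹ r)

/-- A weakly decreasing list of positive integers (a partition shape). -/
def SortedPartList (l : List ℕ) : Prop :=
  l.Pairwise (· ≥ ·) ∧ ∀ x ∈ l, 0 < x

/-- The multiset of letter multiplicities of a word. -/
def multMultiset {n : ℕ} (w : Fin n → ℕ) : Multiset ℕ :=
  (Finset.image w Finset.univ).val.map
    (fun v => (Finset.univ.filter (fun i => w i = v)).card)

/-- The decreasingly sorted letter multiplicities of `w` are given by the list `l`. -/
def HasMultiplicities {n : ℕ} (w : Fin n → ℕ) (l : List ℕ) : Prop :=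
  SortedPartList l ∧ (l : Multiset ℕ) = multMultiset w

/-- The conjugate partition, as a list: `λ*_i = #{k : λ_k ≥ i}`. -/
def conjList (l : List ℕ) : List ℕ :=
  (List.range (l.getD 0 0)).map (fun j => (l.filter (fun x => j + 1 ≤ x)).length)

/-- The complementary pair `(w1, w2)` corresponds to the partition `l`. -/
def CorrespondsTo {n : ℕ} (w1 w2 : Fin n → ℕ) (l : List ℕ) : Prop :=
  HasMultiplicities w1 l ∧ HasMultiplicities w2 (conjList l)

section SpechtAux

open Finset

variable {n : ℕ}

private lemma conj_eval (n : ℕ) (hn : 2 ≤ n) :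
    conjList (2 :: List.replicate (n-2) 1) = [n-1, 1] := by
  simp [conjList, List.range_succ, List.filter, List.filter_replicate]
  omega

private lemma w2_struct {m : ℕ} (w : Fin n → ℕ)
    (h : multMultiset w = {m, 1}) :
    ∃ u c0 : ℕ, ∃ p : Fin n, u ≠ c0 ∧ ∀ j, w j = if j = p then u else c0 := by
  classical
  set I := Finset.image w Finset.univ with hI
  set fib : ℕ → ℕ := fun v => (Finset.univ.filter (fun i => w i = v)).card with hfib
  have hmap : I.val.map fib = {m, 1} := h
  have h1 : (1 : ℕ) ∈ I.val.map fib := by rw [hmap]; simp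
  obtain ⟨y, hyI, hy1⟩ := Multiset.mem_map.1 h1
  have hcard : I.card = 2 := by
    have := congrArg Multiset.card hmap
    simpa using this
  obtain ⟨p, hp⟩ := Finset.card_eq_one.1 hy1
  have hyI' : y ∈ I := hyI
  obtain ⟨x, hxI, hxy⟩ := Finset.exists_mem_ne (s := I) (by omega) y
  have hIxy : I = {x, y} := by
    apply (Finset.eq_of_subset_of_card_le _ _).symm
    · intro z hz
      simp only [Finset.mem_insert, Finset.mem_singleton] at hz
      rcases hz with rfl | rfl <;> assumption
    · rw [hcard, Finset.card_insert_of_notMem (by simpa using hxy)]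
      simp
  have hwp : w p = y := by
    have : p ∈ Finset.univ.filter (fun i => w i = y) := by rw [hp]; simp
    simpa using (Finset.mem_filter.1 this).2
  refine ⟨y, x, p, fun hxy' => hxy hxy'.symm, fun j => ?_⟩
  by_cases hj : j = p
  · subst hj; simp [hwp]
  · simp only [hj, if_neg, if_false]
    have hjI : w j ∈ I := Finset.mem_image_of_mem w (Finset.mem_univ j)
    rw [hIxy] at hjI
    simp only [Finset.mem_insert, Finset.mem_singleton] at hjI
    rcases hjI with h' | h'
    · exact h'
    · exfalso
      have : j ∈ Finset.univ.filter (fun i => w i = y) := by simp [h']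
      rw [hp] at this
      simp at this
      exact hj this

private lemma w1_struct (w : Fin n → ℕ)
    (h : multMultiset w = 2 ::ₘ Multiset.replicate (n-2) 1) :
    ∃ a b : Fin n, a ≠ b ∧ w a = w b ∧
      ∀ σ : Equiv.Perm (Fin n), wact σ w = w → σ = 1 ∨ σ = Equiv.swap a b := by
  classical
  set I := Finset.image w Finset.univ with hI
  set fib : ℕ → ℕ := fun v => (Finset.univ.filter (fun i => w i = v)).card with hfib
  have hmap : I.val.map fib = 2 ::ₘ Multiset.replicate (n-2) 1 := h
  have h2 : (2 : ℕ) ∈ I.val.map fib := by rw [hmap]; simp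
  obtain ⟨v, hvI, hv2⟩ := Multiset.mem_map.1 h2
  have hcount : (I.val.map fib).count 2 = 1 := by
    rw [hmap]
    rw [Multiset.count_cons_self, Multiset.count_replicate]
    simp
  have hmem12 : ∀ m ∈ I.val.map fib, m = 1 ∨ m = 2 := by
    intro m hm
    rw [hmap] at hm
    rcases Multiset.mem_cons.1 hm with h' | h'
    · right; exact h'
    · left; exact Multiset.eq_of_mem_replicate h'
  have huniq : ∀ v' ∈ I, fib v' = 2 → v' = v := by
    intro v' hv'I hv'2
    by_contra hne
    have hcnt : 2 ≤ (I.val.map fib).count 2 := by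
      rw [Multiset.count_map]
      have hv : v ∈ I.val.filter (fun a => 2 = fib a) := by
        rw [Multiset.mem_filter]; exact ⟨hvI, hv2.symm⟩
      have hv' : v' ∈ (I.val.filter (fun a => 2 = fib a)).erase v := by
        rw [Multiset.mem_erase_of_ne hne]
        rw [Multiset.mem_filter]; exact ⟨hv'I, hv'2.symm⟩
      have h1 : 0 < ((I.val.filter (fun a => 2 = fib a)).erase v).card :=
        Multiset.card_pos_iff_exists_mem.2 ⟨v', hv'⟩
      have h2 : ((I.val.filter (fun a => 2 = fib a)).erase v).card
          = (I.val.filter (fun a => 2 = fib a)).card - 1 :=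
        Multiset.card_erase_of_mem hv
      omega
    omega
  have hsing : ∀ x ∈ I, x ≠ v → ∃ i, Finset.univ.filter (fun i => w i = x) = {i} := by
    intro x hxI hxv
    have hx : fib x ∈ I.val.map fib := Multiset.mem_map_of_mem _ hxI
    rcases hmem12 _ hx with h' | h'
    · exact Finset.card_eq_one.1 h'
    · exact absurd (huniq x hxI h') hxv
  obtain ⟨a, b, hab, habs⟩ := Finset.card_eq_two.1 hv2
  have hwa : w a = v := by
    have : a ∈ Finset.univ.filter (fun i => w i = v) := by rw [habs]; simp
    simpa using (Finset.mem_filter.1 this).2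
  have hwb : w b = v := by
    have : b ∈ Finset.univ.filter (fun i => w i = v) := by rw [habs]; simp
    simpa using (Finset.mem_filter.1 this).2
  refine ⟨a, b, hab, hwa.trans hwb.symm, ?_⟩
  intro σ hσ
  have hfix : ∀ i, w (σ i) = w i := by
    intro i
    have := congrFun hσ (σ i)
    simpa [wact] using this.symm
  have hmem : ∀ i, σ i ∈ Finset.univ.filter (fun j => w j = w i) := by
    intro i; simp [hfix i]
  have hid : ∀ i, w i ≠ v → σ i = i := by
    intro i hiv
    obtain ⟨i0, hi0⟩ := hsing (w i) (Finset.mem_image_of_mem w (Finset.mem_univ i)) hiv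
    have h1 : σ i = i0 := by have := hmem i; rw [hi0] at this; simpa using this
    have h2 : i = i0 := by
      have : i ∈ Finset.univ.filter (fun j => w j = w i) := by simp
      rw [hi0] at this; simpa using this
    rw [h1, h2]
  have hab' : σ a ∈ ({a, b} : Finset (Fin n)) ∧ σ b ∈ ({a, b} : Finset (Fin n)) := by
    constructor
    · have := hmem a; rw [hwa, habs] at this; exact this
    · have := hmem b; rw [hwb, habs] at this; exact this
  obtain ⟨hsa, hsb⟩ := hab'
  simp only [Finset.mem_insert, Finset.mem_singleton] at hsa hsb
  rcases hsa with hsa | hsa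
  · left
    have hsbb : σ b = b := by
      rcases hsb with h' | h'
      · exact absurd (σ.injective (h'.trans hsa.symm)).symm hab
      · exact h'
    ext i
    by_cases hiv : w i = v
    · have : i ∈ ({a, b} : Finset (Fin n)) := by
        rw [← habs]; simp [hiv]
      simp only [Finset.mem_insert, Finset.mem_singleton] at this
      rcases this with rfl | rfl <;> simp [hsa, hsbb]
    · simp [hid i hiv]
  · right
    have hsbb : σ b = a := by
      rcases hsb with h' | h'
      · exact h'
      · exact absurd (σ.injective (hsa.trans h'.symm)).symm (fun h => hab h.symm)
    ext i
    by_cases hiv : w i = v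
    · have : i ∈ ({a, b} : Finset (Fin n)) := by
        rw [← habs]; simp [hiv]
      simp only [Finset.mem_insert, Finset.mem_singleton] at this
      rcases this with rfl | rfl <;> simp [hsa, hsbb]
    · rw [hid i hiv, Equiv.swap_apply_of_ne_of_ne]
      · intro h'; subst h'; exact hiv hwa
      · intro h'; subst h'; exact hiv hwb

private lemma stab_coset (w1 : Fin n → ℕ) (a b : Fin n)
    (stab : ∀ σ : Equiv.Perm (Fin n), wact σ w1 = w1 → σ = 1 ∨ σ = Equiv.swap a b)
    (σ σ' : Equiv.Perm (Fin n)) (h : wact σ' w1 = wact σ w1) :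
    σ' = σ ∨ σ' = σ * Equiv.swap a b := by
  have h1 : wact (σ⁻¹ * σ') w1 = w1 := by
    rw [← wact_wact, h, wact_wact, inv_mul_cancel]
    rfl
  rcases stab _ h1 with h' | h'
  · left
    have := congrArg (fun ρ => σ * ρ) h'
    simpa using this
  · right
    have := congrArg (fun ρ => σ * ρ) h'
    simpa [mul_assoc] using this

private lemma young_row (w1 w2 : Fin n → ℕ) (a b : Fin n) (hab : a ≠ b)
    (stab : ∀ σ : Equiv.Perm (Fin n), wact σ w1 = w1 → σ = 1 ∨ σ = Equiv.swap a b)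
    (hτw1 : wact (Equiv.swap a b) w1 = w1)
    (hτw2 : wact (Equiv.swap a b) w2 ≠ w2)
    (σ : Equiv.Perm (Fin n)) (x : Fin n → ℕ) :
    youngChar w1 w2 (wact σ w1) x =
      (Equiv.Perm.sign σ : ℤ) *
        ((if wact σ w2 = x then 1 else 0)
          - (if wact (σ * Equiv.swap a b) w2 = x then 1 else 0)) := by
  classical
  set τ := Equiv.swap a b with hτdef
  have hτne1 : τ ≠ 1 := by
    intro h
    apply hab
    have : τ a = a := by rw [h]; rfl
    rw [hτdef] at this
    rw [← Equiv.swap_apply_left a b, this]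
  have hστ : σ ≠ σ * τ := by
    intro h
    apply hτne1
    have := congrArg (fun ρ => σ⁻¹ * ρ) h
    simpa [mul_assoc] using this.symm
  have hne2 : wact σ w2 ≠ wact (σ * τ) w2 := by
    intro h
    apply hτw2
    have := congrArg (wact σ⁻¹) h
    rw [wact_wact, wact_wact, inv_mul_cancel, ← mul_assoc, inv_mul_cancel, one_mul] at this
    rw [← this]
    rfl
  have hsum : youngChar w1 w2 (wact σ w1) x
      = ∑ σ' ∈ ({σ, σ * τ} : Finset (Equiv.Perm (Fin n))),
          (if wact σ' w1 = wact σ w1 ∧ wact σ' w2 = x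
            then (Equiv.Perm.sign σ' : ℤ) else 0) := by
    rw [youngChar]
    symm
    apply Finset.sum_subset (Finset.subset_univ _)
    intro σ' _ hσ'
    rw [if_neg]
    intro hcond
    apply hσ'
    simp only [Finset.mem_insert, Finset.mem_singleton]
    exact stab_coset w1 a b stab σ σ' hcond.1
  rw [hsum, Finset.sum_pair hστ]
  have h2 : wact (σ * τ) w1 = wact σ w1 := by rw [← wact_wact, hτw1]
  have hsign : (Equiv.Perm.sign (σ * τ) : ℤ) = -(Equiv.Perm.sign σ : ℤ) := by
    rw [hτdef]
    simp [Equiv.Perm.sign_swap hab]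
  by_cases hA : wact σ w2 = x <;> by_cases hB : wact (σ * τ) w2 = x
  · exact absurd (hA.trans hB.symm) hne2
  · simp [hA, hB, h2]
  · simp only [hA, hB, h2, hsign, eq_self_iff_true, true_and, and_true, and_false, if_true, if_false]
    ring
  · simp [hA, hB, h2]

private lemma main_aux {n : ℕ} (hn : 2 ≤ n) (w1 w2 : Fin n → ℕ)
    (hfree : FreePair (w1, w2))
    (u c0 : ℕ) (hnec : u ≠ c0) (a b : Fin n) (hab : a ≠ b)
    (hw2 : ∀ j, w2 j = if j = a then u else c0)
    (hvab : w1 a = w1 b)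
    (stab : ∀ σ : Equiv.Perm (Fin n), wact σ w1 = w1 → σ = 1 ∨ σ = Equiv.swap a b) :
    Nat.card (Rearr w2) = n ∧
    Function.Injective (spechtColR w1 w2) ∧
    AffineIndependent ℝ (spechtColR w1 w2) ∧
    Module.finrank ℝ (affineSpan ℝ (SpechtPolytope w1 w2)).direction = n - 1 := by
  classical
  set τ := Equiv.swap a b with hτdef
  have hτw1 : wact τ w1 = w1 := by
    funext j
    simp only [wact, Function.comp_apply, hτdef, Equiv.symm_swap]
    rcases eq_or_ne j a with rfl | hja
    · rw [Equiv.swap_apply_left]; exact hvab.symm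
    rcases eq_or_ne j b with rfl | hjb
    · rw [Equiv.swap_apply_right]; exact hvab
    · rw [Equiv.swap_apply_of_ne_of_ne hja hjb]
  have hτne1 : τ ≠ 1 := by
    intro h
    apply hab
    have : τ a = a := by rw [h]; rfl
    rw [hτdef] at this
    rw [← Equiv.swap_apply_left a b, this]
  have hτw2 : wact τ w2 ≠ w2 := fun h => hτne1 (hfree τ hτw1 h)
  -- rearrangements of w2
  set rw2 : Fin n → Fin n → ℕ := fun i j => if j = i then u else c0 with hrw2
  have L1 : ∀ σ : Equiv.Perm (Fin n), wact σ w2 = rw2 (σ a) := by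
    intro σ
    funext j
    simp only [wact, Function.comp_apply, hrw2, hw2, Equiv.symm_apply_eq]
  have rw2inj : Function.Injective rw2 := by
    intro i i' h
    have := congrFun h i
    simp only [hrw2, if_pos rfl] at this
    by_contra hne
    rw [if_neg hne] at this
    exact hnec this
  have hrearr : ∀ i, IsRearr w2 (rw2 i) :=
    fun i => ⟨Equiv.swap a i, by rw [L1, Equiv.swap_apply_left]⟩
  have hbij : Function.Bijective (fun i : Fin n => (⟨rw2 i, hrearr i⟩ : Rearr w2)) := by
    constructor
    · intro i i' h
      exact rw2inj (congrArg Subtype.val h)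
    · rintro ⟨x, σ, hσ⟩
      exact ⟨σ a, Subtype.ext ((L1 σ).symm.trans hσ)⟩
  set e : Fin n ≃ Rearr w2 := Equiv.ofBijective _ hbij with hedef
  have heval : ∀ i, (e i).1 = rw2 i := fun i => rfl
  have hcard : Nat.card (Rearr w2) = n := by
    rw [Nat.card_congr e.symm]
    simp
  have hfcard : Fintype.card (Rearr w2) = n := by
    rw [← Nat.card_eq_fintype_card, hcard]
  -- affine independence
  have haff : AffineIndependent ℝ (spechtColR w1 w2) := by
    rw [affineIndependent_iff]
    intro s wt hw0 hws
    set c : Rearr w2 → ℝ := fun r => if r ∈ s then wt r else 0 with hcdef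
    have hc0 : ∑ r, c r = 0 := by
      simp only [hcdef]
      rw [Finset.sum_ite_mem, Finset.univ_inter]
      exact hw0
    have hcs : ∑ r, c r • spechtColR w1 w2 r = 0 := by
      simp only [hcdef, ite_smul, zero_smul]
      rw [Finset.sum_ite_mem, Finset.univ_inter]
      exact hws
    have key : ∀ σ : Equiv.Perm (Fin n), c (e (σ a)) = c (e (σ b)) := by
      intro σ
      have h0 := congrFun hcs (⟨wact σ w1, σ, rfl⟩ : Rearr w1)
      simp only [Finset.sum_apply, Pi.smul_apply, Pi.zero_apply, smul_eq_mul] at h0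
      set S : ℝ := ((Equiv.Perm.sign σ : ℤ) : ℝ) with hSdef
      have hSne : S ≠ 0 := by
        rw [hSdef]
        exact_mod_cast Int.cast_ne_zero.2 (Units.ne_zero _)
      have hrow : ∀ r : Rearr w2,
          spechtColR w1 w2 r (⟨wact σ w1, σ, rfl⟩ : Rearr w1)
            = S * ((if r = e (σ a) then 1 else 0) - (if r = e (σ b) then 1 else 0)) := by
        intro r
        have hy := young_row w1 w2 a b hab stab hτw1 hτw2 σ r.1
        have hA : (wact σ w2 = r.1) = (r = e (σ a)) := by
          rw [L1, ← heval]
          apply propext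
          constructor <;> intro h
          · exact (Subtype.ext h).symm
          · exact (congrArg Subtype.val h).symm
        have hB : (wact (σ * τ) w2 = r.1) = (r = e (σ b)) := by
          have : (σ * τ) a = σ b := by
            simp [hτdef, Equiv.Perm.mul_apply, Equiv.swap_apply_left]
          rw [L1, this, ← heval]
          apply propext
          constructor <;> intro h
          · exact (Subtype.ext h).symm
          · exact (congrArg Subtype.val h).symm
        rw [spechtColR, hy]
        push_cast
        simp only [← hτdef, hA, hB, hSdef]
      have hAB : e (σ a) ≠ e (σ b) := by
        intro h
        exact hab (σ.injective (e.injective h))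
      have h1 : ∑ r : Rearr w2, c r * spechtColR w1 w2 r (⟨wact σ w1, σ, rfl⟩ : Rearr w1)
          = S * c (e (σ a)) - S * c (e (σ b)) := by
        have : ∀ r : Rearr w2,
            c r * spechtColR w1 w2 r (⟨wact σ w1, σ, rfl⟩ : Rearr w1)
              = (if r = e (σ a) then S * c r else 0) - (if r = e (σ b) then S * c r else 0) := by
          intro r
          rw [hrow r]
          rcases eq_or_ne r (e (σ a)) with rfl | hra
          · rw [if_pos rfl, if_neg hAB, if_pos rfl, if_neg (by exact hAB)]
            ring
          · rcases eq_or_ne r (e (σ b)) with rfl | hrb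
            · rw [if_neg hra, if_pos rfl, if_neg hra, if_pos rfl]
              ring
            · rw [if_neg hra, if_neg hrb, if_neg hra, if_neg hrb]
              ring
        rw [Finset.sum_congr rfl (fun r _ => this r), Finset.sum_sub_distrib,
          Finset.sum_ite_eq' Finset.univ (e (σ a)) (fun r => S * c r),
          Finset.sum_ite_eq' Finset.univ (e (σ b)) (fun r => S * c r)]
        simp
      rw [h1] at h0
      have := sub_eq_zero.1 h0
      exact mul_left_cancel₀ hSne this
    have const : ∀ i j : Fin n, c (e i) = c (e j) := by
      intro i j
      rcases eq_or_ne i j with rfl | hij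
      · rfl
      · have hb' : Equiv.swap a i b ≠ i := by
          intro h
          exact hab ((Equiv.swap a i).injective (h.trans (Equiv.swap_apply_left a i).symm)).symm
        set σ := Equiv.swap (Equiv.swap a i b) j * Equiv.swap a i with hσdef
        have h1 : σ a = i := by
          rw [hσdef]
          simp only [Equiv.Perm.mul_apply, Equiv.swap_apply_left]
          exact Equiv.swap_apply_of_ne_of_ne (fun h => hb' h.symm) hij
        have h2 : σ b = j := by
          rw [hσdef]
          simp only [Equiv.Perm.mul_apply]
          exact Equiv.swap_apply_left _ _
        rw [← h1, ← h2]
        exact key σ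
    have hzero : ∀ r : Rearr w2, c r = 0 := by
      have hn0 : (0 : ℕ) < n := by omega
      have hsum : ∑ r : Rearr w2, c r = (n : ℝ) * c (e ⟨0, hn0⟩) := by
        rw [← Equiv.sum_comp e (fun r => c r)]
        rw [Finset.sum_congr rfl (fun i _ => const i ⟨0, hn0⟩)]
        rw [Finset.sum_const, Finset.card_univ, Fintype.card_fin, nsmul_eq_mul]
      have hc00 : c (e ⟨0, hn0⟩) = 0 := by
        have := hc0
        rw [hsum] at this
        have hnne : (n : ℝ) ≠ 0 := Nat.cast_ne_zero.2 (by omega)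
        exact (mul_eq_zero.1 this).resolve_left hnne
      intro r
      have : c (e (e.symm r)) = 0 := by rw [const (e.symm r) ⟨0, hn0⟩, hc00]
      rwa [Equiv.apply_symm_apply] at this
    intro r hr
    simpa [hcdef, hr] using hzero r
  refine ⟨hcard, haff.injective, haff, ?_⟩
  rw [SpechtPolytope, affineSpan_convexHull, direction_affineSpan]
  exact haff.finrank_vectorSpan (by rw [hfcard]; omega)

end SpechtAux

/-- For `λ = (2,1,…,1)` a partition of `n ≥ 2`, the set `R(w2)` has
exactly `n` elements, the `n` columns of the real Specht matrix are pairwise distinct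
and affinely independent, and the Specht polytope is an `(n-1)`-dimensional simplex. -/
theorem specht_stmt_12 {n : ℕ} (hn : 2 ≤ n) (w1 w2 : Fin n → ℕ)
    (hc : Complementary w1 w2)
    (hcorr : CorrespondsTo w1 w2 (2 :: List.replicate (n - 2) 1)) :
    Nat.card (Rearr w2) = n ∧
    Function.Injective (spechtColR w1 w2) ∧
    AffineIndependent ℝ (spechtColR w1 w2) ∧
    Module.finrank ℝ (affineSpan ℝ (SpechtPolytope w1 w2)).direction = n - 1 := by
  classical
  obtain ⟨hcr, hfree⟩ := hc
  obtain ⟨⟨hs1, hm1⟩, ⟨hs2, hm2⟩⟩ := hcorr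
  rw [conj_eval n hn] at hm2
  have hm1' : multMultiset w1 = 2 ::ₘ Multiset.replicate (n-2) 1 := by
    rw [← hm1, ← Multiset.cons_coe, ← Multiset.coe_replicate]
  have hm2' : multMultiset w2 = {n-1, 1} := by
    rw [← hm2]
    rfl
  obtain ⟨u, c0, p, hnec, hw2⟩ := w2_struct w2 hm2'
  obtain ⟨a, b, hab, hvab, stab⟩ := w1_struct w1 hm1'
  have hτw1 : wact (Equiv.swap a b) w1 = w1 := by
    funext j
    simp only [wact, Function.comp_apply, Equiv.symm_swap]
    rcases eq_or_ne j a with rfl | hja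
    · rw [Equiv.swap_apply_left]; exact hvab.symm
    rcases eq_or_ne j b with rfl | hjb
    · rw [Equiv.swap_apply_right]; exact hvab
    · rw [Equiv.swap_apply_of_ne_of_ne hja hjb]
  have hτne1 : Equiv.swap a b ≠ 1 := by
    intro h
    apply hab
    rw [← Equiv.swap_apply_left a b, h]
    rfl
  have hτw2 : wact (Equiv.swap a b) w2 ≠ w2 := fun h => hτne1 (hfree _ hτw1 h)
  have hpab : p = a ∨ p = b := by
    by_contra hcon
    push_neg at hcon
    apply hτw2
    funext j
    simp only [wact, Function.comp_apply, Equiv.symm_swap]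
    rw [hw2, hw2]
    rcases eq_or_ne j a with rfl | hja
    · rw [Equiv.swap_apply_left, if_neg (fun h => hcon.2 h.symm),
        if_neg (fun h => hcon.1 h.symm)]
    rcases eq_or_ne j b with rfl | hjb
    · rw [Equiv.swap_apply_right, if_neg (fun h => hcon.1 h.symm),
        if_neg (fun h => hcon.2 h.symm)]
    · rw [Equiv.swap_apply_of_ne_of_ne hja hjb]
  rcases hpab with h | h
  · subst h
    exact main_aux hn w1 w2 hfree u c0 hnec p b hab hw2 hvab stab
  · subst h
    apply main_aux hn w1 w2 hfree u c0 hnec p a (fun h => hab h.symm) hw2 hvab.symm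
    intro σ hσ
    rcases stab σ hσ with h | h
    · left; exact h
    · right; rw [h, Equiv.swap_comm]
end

section
/- Let n ≥ 2 and λ = (n−1, 1), with row word w1 = 1 1 ⋯ 1 2 (letters 1 with one 2) and column word w2 = 1 2 3 ⋯ (n−1) 1, which are complementary. Identify R(w1) with {1, …, n} via the position of the letter 2, so that columns of the Specht matrix lie in ℝ^n with standard basis e_1, …, e_n. Then every column of the Specht matrix equals e_i − e_j for some i ≠ j; and if n ≥ 4, then for every pair i ≠ j both e_i − e_j and e_j − e_i occur among the columns. -/
/-- The row word `w1 = 1 1 ⋯ 1 2` for the partition `(n-1, 1)`. -/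
def rowWord (n : ℕ) : Fin n → ℕ := fun i => if (i : ℕ) = n - 1 then 2 else 1

/-- The column word `w2 = 1 2 3 ⋯ (n-1) 1` for the partition `(n-1, 1)`. -/
def colWord (n : ℕ) : Fin n → ℕ := fun i => if (i : ℕ) = n - 1 then 1 else (i : ℕ) + 1

/-- The rearrangement of the row word with the letter `2` in position `k`. -/
def rowWordAt {n : ℕ} (k : Fin n) : Fin n → ℕ := fun i => if i = k then 2 else 1

section SpechtAux

variable {n : ℕ}

lemma wact_one (w : Fin n → ℕ) : wact 1 w = w := rfl

lemma rowWordAt_iff {k k' : Fin n} : rowWordAt k = rowWordAt k' ↔ k = k' := by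
  constructor
  · intro h
    by_contra hne
    have := congrFun h k
    simp [rowWordAt, hne] at this
  · rintro rfl; rfl

lemma wact_rowWordAt (σ : Equiv.Perm (Fin n)) (k : Fin n) :
    wact σ (rowWordAt k) = rowWordAt (σ k) := by
  funext i
  simp only [wact, Function.comp_apply, rowWordAt, Equiv.symm_apply_eq]

lemma rowWord_eq (hn : 0 < n) : rowWord n = rowWordAt (⟨n - 1, by omega⟩ : Fin n) := by
  funext i
  simp [rowWord, rowWordAt, Fin.ext_iff]

lemma colWord_eq_cases (x y : Fin n) (h : colWord n x = colWord n y) :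
    x = y ∨ ((x : ℕ) = 0 ∧ (y : ℕ) = n - 1) ∨ ((x : ℕ) = n - 1 ∧ (y : ℕ) = 0) := by
  simp only [colWord] at h
  rcases eq_or_ne (x : ℕ) (n - 1) with hx | hx <;> rcases eq_or_ne (y : ℕ) (n - 1) with hy | hy
  · exact Or.inl (Fin.ext (hx.trans hy.symm))
  · rw [if_pos hx, if_neg hy] at h
    exact Or.inr (Or.inr ⟨hx, by omega⟩)
  · rw [if_neg hx, if_pos hy] at h
    exact Or.inr (Or.inl ⟨by omega, hy⟩)
  · rw [if_neg hx, if_neg hy] at h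
    exact Or.inl (Fin.ext (by omega))

lemma colWord_one (hn : 2 ≤ n) (x : Fin n) (hx : (x : ℕ) = 0 ∨ (x : ℕ) = n - 1) :
    colWord n x = 1 := by
  simp only [colWord]
  split <;> omega

lemma zl_ne (hn : 2 ≤ n) : (⟨0, by omega⟩ : Fin n) ≠ (⟨n - 1, by omega⟩ : Fin n) := by
  intro h
  have := congrArg Fin.val h
  simp at this
  omega

lemma colWord_swap (hn : 2 ≤ n) :
    wact (Equiv.swap (⟨0, by omega⟩ : Fin n) ⟨n - 1, by omega⟩) (colWord n) = colWord n := by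
  funext i
  simp only [wact, Function.comp_apply, Equiv.symm_swap]
  rcases eq_or_ne i ⟨0, by omega⟩ with rfl | hi0
  · rw [Equiv.swap_apply_left, colWord_one hn _ (Or.inr rfl), colWord_one hn _ (Or.inl rfl)]
  · rcases eq_or_ne i ⟨n - 1, by omega⟩ with rfl | hi1
    · rw [Equiv.swap_apply_right, colWord_one hn _ (Or.inl rfl), colWord_one hn _ (Or.inr rfl)]
    · rw [Equiv.swap_apply_of_ne_of_ne hi0 hi1]

set_option maxHeartbeats 1000000 in
lemma colWord_stab (hn : 2 ≤ n) (τ : Equiv.Perm (Fin n)) :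
    wact τ (colWord n) = colWord n ↔
      τ = 1 ∨ τ = Equiv.swap (⟨0, by omega⟩ : Fin n) ⟨n - 1, by omega⟩ := by
  have hzl := zl_ne hn
  constructor
  · intro h
    have h' : ∀ i, colWord n (τ i) = colWord n i := by
      intro i
      have h2 := congrFun h (τ i)
      simp only [wact, Function.comp_apply, Equiv.symm_apply_apply] at h2
      exact h2.symm
    have hτz : τ ⟨0, by omega⟩ = ⟨0, by omega⟩ ∨ τ ⟨0, by omega⟩ = ⟨n - 1, by omega⟩ := by
      rcases colWord_eq_cases _ _ (h' ⟨0, by omega⟩) with h1 | ⟨h1, h2⟩ | ⟨h1, h2⟩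
      · exact Or.inl h1
      · simp at h2; omega
      · exact Or.inr (Fin.ext h1)
    have hτl : τ ⟨n - 1, by omega⟩ = ⟨0, by omega⟩ ∨ τ ⟨n - 1, by omega⟩ = ⟨n - 1, by omega⟩ := by
      rcases colWord_eq_cases _ _ (h' ⟨n - 1, by omega⟩) with h1 | ⟨h1, h2⟩ | ⟨h1, h2⟩
      · exact Or.inr h1
      · exact Or.inl (Fin.ext h1)
      · simp at h2; omega
    have hfix : ∀ i : Fin n, i ≠ ⟨0, by omega⟩ → i ≠ ⟨n - 1, by omega⟩ → τ i = i := by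
      intro i hiz hil
      rcases colWord_eq_cases _ _ (h' i) with h1 | ⟨h1, h2⟩ | ⟨h1, h2⟩
      · exact h1
      · exact absurd (Fin.ext h2) hil
      · exact absurd (Fin.ext h2) hiz
    rcases hτz with h0 | h0
    · left
      rcases hτl with h1 | h1
      · exact absurd (τ.injective (h1.trans h0.symm)) (Ne.symm hzl)
      · apply Equiv.ext
        intro i
        rcases eq_or_ne i ⟨0, by omega⟩ with rfl | hiz
        · simpa using h0
        · rcases eq_or_ne i ⟨n - 1, by omega⟩ with rfl | hil
          · simpa using h1
          · simpa using hfix i hiz hil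
    · right
      have h1 : τ ⟨n - 1, by omega⟩ = ⟨0, by omega⟩ := by
        rcases hτl with h1 | h1
        · exact h1
        · exact absurd (τ.injective (h0.trans h1.symm)) hzl
      apply Equiv.ext
      intro i
      rcases eq_or_ne i ⟨0, by omega⟩ with rfl | hiz
      · rw [h0, Equiv.swap_apply_left]
      · rcases eq_or_ne i ⟨n - 1, by omega⟩ with rfl | hil
        · rw [h1, Equiv.swap_apply_right]
        · rw [hfix i hiz hil, Equiv.swap_apply_of_ne_of_ne hiz hil]
  · rintro (rfl | rfl)
    · exact wact_one _
    · exact colWord_swap hn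

set_option maxHeartbeats 1000000 in
lemma wact_colWord_iff (hn : 2 ≤ n) (σ ρ : Equiv.Perm (Fin n)) :
    wact σ (colWord n) = wact ρ (colWord n) ↔
      σ = ρ ∨ σ = ρ * Equiv.swap (⟨0, by omega⟩ : Fin n) ⟨n - 1, by omega⟩ := by
  have step : wact σ (colWord n) = wact ρ (colWord n) ↔
      wact (ρ⁻¹ * σ) (colWord n) = colWord n := by
    constructor
    · intro h
      have h2 := congrArg (wact ρ⁻¹) h
      rwa [wact_wact, wact_wact, inv_mul_cancel, wact_one] at h2
    · intro h
      have h2 := congrArg (wact ρ) h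
      rwa [wact_wact, mul_inv_cancel_left] at h2
  rw [step, colWord_stab hn, inv_mul_eq_one, inv_mul_eq_iff_eq_mul, eq_comm (a := ρ)]

set_option maxHeartbeats 1000000 in
lemma young_eq (hn : 2 ≤ n) (ρ : Equiv.Perm (Fin n)) (k : Fin n) :
    youngChar (rowWord n) (colWord n) (rowWordAt k) (wact ρ (colWord n)) =
      if k = ρ ⟨n - 1, by omega⟩ then (Equiv.Perm.sign ρ : ℤ)
      else if k = ρ ⟨0, by omega⟩ then -(Equiv.Perm.sign ρ : ℤ) else 0 := by
  have hzl := zl_ne hn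
  have hρne : ρ ⟨n - 1, by omega⟩ ≠ ρ ⟨0, by omega⟩ := fun h => hzl (ρ.injective h.symm)
  have key : ∀ σ : Equiv.Perm (Fin n),
      (wact σ (rowWord n) = rowWordAt k ∧ wact σ (colWord n) = wact ρ (colWord n)) ↔
      ((σ = ρ ∧ k = ρ ⟨n - 1, by omega⟩) ∨
        (σ = ρ * Equiv.swap (⟨0, by omega⟩ : Fin n) ⟨n - 1, by omega⟩ ∧ k = ρ ⟨0, by omega⟩)) := by
    intro σ
    rw [rowWord_eq (by omega), wact_rowWordAt, rowWordAt_iff, wact_colWord_iff hn]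
    constructor
    · rintro ⟨h1, (rfl | rfl)⟩
      · exact Or.inl ⟨rfl, h1.symm⟩
      · refine Or.inr ⟨rfl, ?_⟩
        rw [← h1, Equiv.Perm.mul_apply, Equiv.swap_apply_right]
    · rintro (⟨rfl, rfl⟩ | ⟨rfl, rfl⟩)
      · exact ⟨rfl, Or.inl rfl⟩
      · exact ⟨by rw [Equiv.Perm.mul_apply, Equiv.swap_apply_right], Or.inr rfl⟩
  unfold youngChar
  rw [Finset.sum_congr rfl fun σ _ => if_congr (key σ) rfl rfl]
  by_cases h1 : k = ρ ⟨n - 1, by omega⟩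
  · have h2 : ¬ k = ρ ⟨0, by omega⟩ := by rw [h1]; exact hρne
    rw [if_pos h1]
    have : ∀ σ : Equiv.Perm (Fin n),
        (if (σ = ρ ∧ k = ρ ⟨n - 1, by omega⟩) ∨
          (σ = ρ * Equiv.swap (⟨0, by omega⟩ : Fin n) ⟨n - 1, by omega⟩ ∧ k = ρ ⟨0, by omega⟩)
          then (Equiv.Perm.sign σ : ℤ) else 0) =
        (if σ = ρ then (Equiv.Perm.sign σ : ℤ) else 0) := by
      intro σ
      apply if_congr _ rfl rfl
      constructor
      · rintro (⟨h, _⟩ | ⟨_, h⟩)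
        · exact h
        · exact absurd h h2
      · intro h
        exact Or.inl ⟨h, h1⟩
    rw [Finset.sum_congr rfl fun σ _ => this σ, Finset.sum_ite_eq' Finset.univ ρ,
      if_pos (Finset.mem_univ ρ)]
  · rw [if_neg h1]
    by_cases h2 : k = ρ ⟨0, by omega⟩
    · rw [if_pos h2]
      have : ∀ σ : Equiv.Perm (Fin n),
          (if (σ = ρ ∧ k = ρ ⟨n - 1, by omega⟩) ∨
            (σ = ρ * Equiv.swap (⟨0, by omega⟩ : Fin n) ⟨n - 1, by omega⟩ ∧ k = ρ ⟨0, by omega⟩)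
            then (Equiv.Perm.sign σ : ℤ) else 0) =
          (if σ = ρ * Equiv.swap (⟨0, by omega⟩ : Fin n) ⟨n - 1, by omega⟩
            then (Equiv.Perm.sign σ : ℤ) else 0) := by
        intro σ
        apply if_congr _ rfl rfl
        constructor
        · rintro (⟨_, h⟩ | ⟨h, _⟩)
          · exact absurd h h1
          · exact h
        · intro h
          exact Or.inr ⟨h, h2⟩
      rw [Finset.sum_congr rfl fun σ _ => this σ, Finset.sum_ite_eq' Finset.univ,
        if_pos (Finset.mem_univ _)]
      rw [Equiv.Perm.sign_mul, Equiv.Perm.sign_swap hzl]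
      simp
    · have : ∀ σ : Equiv.Perm (Fin n),
          (if (σ = ρ ∧ k = ρ ⟨n - 1, by omega⟩) ∨
            (σ = ρ * Equiv.swap (⟨0, by omega⟩ : Fin n) ⟨n - 1, by omega⟩ ∧ k = ρ ⟨0, by omega⟩)
            then (Equiv.Perm.sign σ : ℤ) else 0) = 0 := by
        intro σ
        rw [if_neg]
        rintro (⟨_, h⟩ | ⟨_, h⟩)
        · exact h1 h
        · exact h2 h
      rw [if_neg h2, Finset.sum_congr rfl fun σ _ => this σ, Finset.sum_const_zero]

set_option maxHeartbeats 1000000 in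
lemma col_single (hn : 2 ≤ n) (ρ : Equiv.Perm (Fin n)) (hs : Equiv.Perm.sign ρ = 1) :
    (fun k : Fin n =>
        (youngChar (rowWord n) (colWord n) (rowWordAt k) (wact ρ (colWord n)) : ℝ))
      = Pi.single (ρ ⟨n - 1, by omega⟩) 1 - Pi.single (ρ ⟨0, by omega⟩) 1 := by
  have hzl := zl_ne hn
  have hρne : ρ ⟨n - 1, by omega⟩ ≠ ρ ⟨0, by omega⟩ := fun h => hzl (ρ.injective h.symm)
  funext k
  rw [young_eq hn ρ k, hs]
  simp only [Units.val_one, Pi.sub_apply, Pi.single_apply]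
  split_ifs with h1 h2 <;> try norm_num
  exact absurd (h1.symm.trans h2) hρne

lemma freepair_w (hn : 2 ≤ n) : FreePair (rowWord n, colWord n) := by
  intro σ h1 h2
  have h1' : wact σ (rowWord n) = rowWord n := h1
  have h2' : wact σ (colWord n) = colWord n := h2
  rcases (colWord_stab hn σ).mp h2' with rfl | rfl
  · rfl
  · exfalso
    rw [rowWord_eq (by omega : 0 < n), wact_rowWordAt, rowWordAt_iff,
      Equiv.swap_apply_right] at h1'
    exact zl_ne hn h1'

set_option maxHeartbeats 1000000 in
lemma reach (hn : 2 ≤ n) (p : (Fin n → ℕ) × (Fin n → ℕ)) (h1 : IsRearr (rowWord n) p.1)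
    (h2 : IsRearr (colWord n) p.2) (hf : FreePair p) :
    ∃ σ : Equiv.Perm (Fin n), wact σ (rowWord n) = p.1 ∧ wact σ (colWord n) = p.2 := by
  obtain ⟨τ, hτ⟩ := h1
  obtain ⟨ρ, hρ⟩ := h2
  have hzl := zl_ne hn
  have hp1 : p.1 = rowWordAt (τ ⟨n - 1, by omega⟩) := by
    rw [← hτ, rowWord_eq (by omega : 0 < n), wact_rowWordAt]
  by_cases hc1 : τ ⟨n - 1, by omega⟩ = ρ ⟨n - 1, by omega⟩
  · refine ⟨ρ, ?_, hρ⟩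
    rw [rowWord_eq (by omega : 0 < n), wact_rowWordAt, hp1, hc1]
  by_cases hc2 : τ ⟨n - 1, by omega⟩ = ρ ⟨0, by omega⟩
  · refine ⟨ρ * Equiv.swap (⟨0, by omega⟩ : Fin n) ⟨n - 1, by omega⟩, ?_, ?_⟩
    · rw [rowWord_eq (by omega : 0 < n), wact_rowWordAt, hp1, hc2,
        Equiv.Perm.mul_apply, Equiv.swap_apply_right]
    · rw [← wact_wact, colWord_swap hn, hρ]
  · exfalso
    set s : Equiv.Perm (Fin n) := Equiv.swap (⟨0, by omega⟩ : Fin n) ⟨n - 1, by omega⟩ with hs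
    have hkey := hf (ρ * s * ρ⁻¹) ?_ ?_
    · have hs1 : s = 1 := by
        have h3 := congrArg (fun g => ρ⁻¹ * g * ρ) hkey
        simpa [mul_assoc] using h3
      have : s ⟨0, by omega⟩ = ⟨n - 1, by omega⟩ := Equiv.swap_apply_left _ _
      rw [hs1] at this
      exact hzl this
    · rw [hp1, wact_rowWordAt, rowWordAt_iff]
      have hx1 : ρ⁻¹ (τ ⟨n - 1, by omega⟩) ≠ ⟨0, by omega⟩ := by
        intro h
        exact hc2 (by rw [← ρ.apply_symm_apply (τ ⟨n - 1, by omega⟩)]; exact congrArg ρ h)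
      have hx2 : ρ⁻¹ (τ ⟨n - 1, by omega⟩) ≠ ⟨n - 1, by omega⟩ := by
        intro h
        exact hc1 (by rw [← ρ.apply_symm_apply (τ ⟨n - 1, by omega⟩)]; exact congrArg ρ h)
      simp only [Equiv.Perm.mul_apply]
      rw [show ρ⁻¹ (τ ⟨n - 1, by omega⟩) = (ρ⁻¹ : Equiv.Perm (Fin n)) (τ ⟨n - 1, by omega⟩)
        from rfl] at hx1 hx2
      rw [Equiv.swap_apply_of_ne_of_ne hx1 hx2, Equiv.Perm.coe_inv, Equiv.apply_symm_apply]
    · rw [← hρ, wact_wact, inv_mul_cancel_right, ← wact_wact, colWord_swap hn]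

set_option maxHeartbeats 1000000 in
lemma exists_sign_one (h4 : 4 ≤ n) (i j : Fin n) (hij : i ≠ j) :
    ∃ ρ : Equiv.Perm (Fin n), ρ ⟨n - 1, by omega⟩ = i ∧ ρ ⟨0, by omega⟩ = j ∧
      Equiv.Perm.sign ρ = 1 := by
  have hn : 2 ≤ n := by omega
  obtain ⟨s0, hs0⟩ : ∃ s0 : Equiv.Perm (Fin n), s0 = Equiv.swap (⟨0, by omega⟩ : Fin n) j :=
    ⟨_, rfl⟩
  obtain ⟨ρ0, hρ0⟩ : ∃ ρ0 : Equiv.Perm (Fin n),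
      ρ0 = s0 * Equiv.swap (⟨n - 1, by omega⟩ : Fin n) (s0⁻¹ i) := ⟨_, rfl⟩
  have h0l : ρ0 ⟨n - 1, by omega⟩ = i := by
    rw [hρ0, Equiv.Perm.mul_apply, Equiv.swap_apply_left, Equiv.Perm.coe_inv, Equiv.apply_symm_apply]
  have h0z : ρ0 ⟨0, by omega⟩ = j := by
    have hz1 : (⟨0, by omega⟩ : Fin n) ≠ ⟨n - 1, by omega⟩ := zl_ne hn
    have hz2 : (⟨0, by omega⟩ : Fin n) ≠ s0⁻¹ i := by
      intro h
      apply hij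
      have h2 := congrArg s0 h
      rw [Equiv.Perm.coe_inv, Equiv.apply_symm_apply, hs0, Equiv.swap_apply_left] at h2
      exact h2.symm
    rw [hρ0, Equiv.Perm.mul_apply, Equiv.swap_apply_of_ne_of_ne hz1 hz2, hs0,
      Equiv.swap_apply_left]
  rcases Int.units_eq_one_or (Equiv.Perm.sign ρ0) with hsg | hsg
  · exact ⟨ρ0, h0l, h0z, hsg⟩
  · have h1n : ((⟨1, by omega⟩ : Fin n) : ℕ) = 1 := rfl
    have h2n : ((⟨2, by omega⟩ : Fin n) : ℕ) = 2 := rfl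
    have h12 : (⟨1, by omega⟩ : Fin n) ≠ ⟨2, by omega⟩ := by
      intro h; have := congrArg Fin.val h; simp at this
    refine ⟨ρ0 * Equiv.swap (⟨1, by omega⟩ : Fin n) ⟨2, by omega⟩, ?_, ?_, ?_⟩
    · rw [Equiv.Perm.mul_apply,
        Equiv.swap_apply_of_ne_of_ne (by intro h; have := congrArg Fin.val h; simp at this; omega)
          (by intro h; have := congrArg Fin.val h; simp at this; omega), h0l]
    · rw [Equiv.Perm.mul_apply,
        Equiv.swap_apply_of_ne_of_ne (by intro h; have := congrArg Fin.val h; simp at this)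
          (by intro h; have := congrArg Fin.val h; simp at this), h0z]
    · simp only [Equiv.Perm.sign_mul, Equiv.Perm.sign_swap h12, hsg]
      simp

end SpechtAux

set_option maxHeartbeats 1000000 in
/-- For `λ = (n-1, 1)` with the indicated row and column words (which
are complementary), identifying `R(w1)` with `{1, …, n}` via the position of the
letter `2`, every column of the Specht matrix is of the form `e_i − e_j` with
`i ≠ j`; and for `n ≥ 4`, every difference `e_i − e_j` (`i ≠ j`) occurs as a column. -/
theorem specht_stmt_13 {n : ℕ} (hn : 2 ≤ n) :
    Complementary (rowWord n) (colWord n) ∧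
    (∀ r2 : Fin n → ℕ, IsRearr (colWord n) r2 →
      ∃ i j : Fin n, i ≠ j ∧
        (fun k : Fin n => (youngChar (rowWord n) (colWord n) (rowWordAt k) r2 : ℝ))
          = Pi.single i 1 - Pi.single j 1) ∧
    (4 ≤ n → ∀ i j : Fin n, i ≠ j →
      ∃ r2 : Fin n → ℕ, IsRearr (colWord n) r2 ∧
        (fun k : Fin n => (youngChar (rowWord n) (colWord n) (rowWordAt k) r2 : ℝ))
          = Pi.single i 1 - Pi.single j 1) := by
  have hzl := zl_ne hn
  refine ⟨⟨⟨⟨(rowWord n, colWord n), ⟨1, wact_one _⟩, ⟨1, wact_one _⟩, freepair_w hn⟩, ?_⟩,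
      freepair_w hn⟩, ?_, ?_⟩
  · intro p q hp1 hp2 hpf hq1 hq2 hqf
    obtain ⟨σp, hσp1, hσp2⟩ := reach hn p hp1 hp2 hpf
    obtain ⟨σq, hσq1, hσq2⟩ := reach hn q hq1 hq2 hqf
    refine ⟨σq * σp⁻¹, ?_, ?_⟩
    · rw [← hσp1, wact_wact, inv_mul_cancel_right, hσq1]
    · rw [← hσp2, wact_wact, inv_mul_cancel_right, hσq2]
  · intro r2 hr2
    obtain ⟨ρ, rfl⟩ := hr2
    rcases Int.units_eq_one_or (Equiv.Perm.sign ρ) with hsg | hsg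
    · exact ⟨ρ ⟨n - 1, by omega⟩, ρ ⟨0, by omega⟩,
        fun h => hzl (ρ.injective h.symm), col_single hn ρ hsg⟩
    · have hr : wact ρ (colWord n) =
          wact (ρ * Equiv.swap (⟨0, by omega⟩ : Fin n) ⟨n - 1, by omega⟩) (colWord n) :=
        ((wact_colWord_iff hn _ ρ).mpr (Or.inr rfl)).symm
      have hsg' : Equiv.Perm.sign
          (ρ * Equiv.swap (⟨0, by omega⟩ : Fin n) ⟨n - 1, by omega⟩) = 1 := by
        rw [Equiv.Perm.sign_mul, hsg, Equiv.Perm.sign_swap hzl]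
        simp
      rw [hr]
      refine ⟨_ , _, ?_, col_single hn _ hsg'⟩
      intro h
      exact hzl ((ρ * Equiv.swap (⟨0, by omega⟩ : Fin n) ⟨n - 1, by omega⟩).injective h.symm)
  · intro h4 i j hij
    obtain ⟨ρ, hl, hz, hsg⟩ := exists_sign_one h4 i j hij
    refine ⟨wact ρ (colWord n), ⟨ρ, rfl⟩, ?_⟩
    rw [col_single hn ρ hsg, hl, hz]
end

section
/- Let n ≥ 1 and let S be a nonempty proper subset of {0, 1, …, n}, with complement T. Then the maximum of the linear functional x ↦ Σ_{i∈S} x_i over the root polytope P_{A_n} equals 1, and the set of maximizers F_S = {x ∈ P_{A_n} : Σ_{i∈S} x_i = 1} is an exposed face of P_{A_n} equal to the convex hull of {e_i − e_j : i ∈ S, j ∈ T}; this face has affine dimension n − 1 (it is a facet, congruent to the product of simplices Δ_S × Δ_T), and the 2^{n+1} − 2 faces F_S for distinct nonempty proper S are pairwise distinct. -/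
open Module

/-- The set of roots `e_i − e_j` (`i ≠ j`) of type `A_n` in `ℝ^{n+1}`. -/
def rootVectors (n : ℕ) : Set (Fin (n + 1) → ℝ) :=
  {x | ∃ i j : Fin (n + 1), i ≠ j ∧ x = Pi.single i 1 - Pi.single j 1}

/-- The root polytope `P_{A_n}`: the convex hull of the roots `e_i − e_j`. -/
noncomputable def rootPolytope (n : ℕ) : Set (Fin (n + 1) → ℝ) :=
  convexHull ℝ (rootVectors n)

lemma face_convexHull {E : Type*} [AddCommGroup E] [Module ℝ E] (V : Set E)
    (f : E → ℝ) (hf : IsLinearMap ℝ f) (c : ℝ) (h : ∀ v ∈ V, f v ≤ c) :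
    {x ∈ convexHull ℝ V | f x = c} = convexHull ℝ {v ∈ V | f v = c} := by
  classical
  apply Set.Subset.antisymm
  · rintro x ⟨hx, hfx⟩
    rw [convexHull_eq] at hx
    obtain ⟨ι, t, w, z, hw0, hw1, hz, hxeq⟩ := hx
    have hsum : ∑ i ∈ t, w i • z i = x := by
      rw [← Finset.centerMass_eq_of_sum_1 _ _ hw1, hxeq]
    have hfx' : ∑ i ∈ t, w i * f (z i) = c := by
      have h' := map_sum (hf.mk' f) (fun i => w i • z i) t
      simp only [IsLinearMap.mk'_apply] at h'
      rw [hsum, hfx] at h'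
      simp only [hf.map_smul, smul_eq_mul] at h'
      exact h'.symm
    have hzero : ∀ i ∈ t, w i * (c - f (z i)) = 0 := by
      rw [← Finset.sum_eq_zero_iff_of_nonneg]
      · simp only [mul_sub]
        rw [Finset.sum_sub_distrib, hfx', ← Finset.sum_mul, hw1, one_mul, sub_self]
      · intro i hi
        exact mul_nonneg (hw0 i hi) (sub_nonneg.2 (h _ (hz i hi)))
    rw [← hxeq, ← Finset.centerMass_filter_ne_zero z]
    apply Finset.centerMass_mem_convexHull
    · intro i hi; exact hw0 i (Finset.mem_filter.1 hi).1
    · rw [Finset.sum_filter_ne_zero, hw1]; norm_num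
    · intro i hi
      obtain ⟨hit, hwi⟩ := Finset.mem_filter.1 hi
      refine ⟨hz i hit, ?_⟩
      rcases mul_eq_zero.1 (hzero i hit) with h' | h'
      · exact absurd h' hwi
      · linarith [sub_eq_zero.1 h']
  · intro x hx
    refine ⟨convexHull_mono (Set.sep_subset _ _) hx, ?_⟩
    exact convexHull_min (fun v hv => hv.2) (convex_hyperplane hf c) hx

/-- For a nonempty proper subset `S` of `{0,…,n}` with complement `T`,
the maximum of `x ↦ Σ_{i∈S} x_i` over `P_{A_n}` is `1`; the set of maximizers
`F_S = {x ∈ P_{A_n} : Σ_{i∈S} x_i = 1}` is an exposed face equal to the convex hull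
of `{e_i − e_j : i ∈ S, j ∈ T}`; it has affine dimension `n − 1` (a facet); and the
faces `F_S` for distinct nonempty proper `S` are pairwise distinct. -/
theorem specht_stmt_15 (n : ℕ) (hn : 1 ≤ n) (S : Finset (Fin (n + 1)))
    (hS : S.Nonempty) (hS' : S ≠ Finset.univ) :
    IsGreatest ((fun x => ∑ i ∈ S, x i) '' rootPolytope n) 1 ∧
    {x ∈ rootPolytope n | ∑ i ∈ S, x i = 1}
      = convexHull ℝ {x | ∃ i ∈ S, ∃ j ∉ S, x = Pi.single i 1 - Pi.single j 1} ∧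
    IsExposed ℝ (rootPolytope n) {x ∈ rootPolytope n | ∑ i ∈ S, x i = 1} ∧
    Module.finrank ℝ
      (affineSpan ℝ {x ∈ rootPolytope n | ∑ i ∈ S, x i = 1}).direction = n - 1 ∧
    ∀ S' : Finset (Fin (n + 1)), S'.Nonempty → S' ≠ Finset.univ →
      {x ∈ rootPolytope n | ∑ i ∈ S', x i = 1} = {x ∈ rootPolytope n | ∑ i ∈ S, x i = 1} →
      S' = S := by
  classical
  obtain ⟨i0, hi0⟩ := hS
  obtain ⟨j0, hj0⟩ : ∃ j, j ∉ S := by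
    by_contra h
    push_neg at h
    exact hS' (Finset.eq_univ_iff_forall.2 h)
  -- basic computation of the functional on roots
  have hroot : ∀ (T : Finset (Fin (n + 1))) (a b : Fin (n + 1)),
      ∑ i ∈ T, (Pi.single a 1 - Pi.single b 1 : Fin (n + 1) → ℝ) i
        = (if a ∈ T then (1 : ℝ) else 0) - (if b ∈ T then 1 else 0) := by
    intro T a b
    simp [Finset.sum_sub_distrib, Finset.sum_pi_single']
  have hflin : IsLinearMap ℝ (fun x : Fin (n + 1) → ℝ => ∑ i ∈ S, x i) :=
    ⟨fun x y => by simp [Finset.sum_add_distrib], fun c x => by simp [Finset.mul_sum]⟩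
  -- upper bound
  have hub : ∀ x ∈ rootPolytope n, ∑ i ∈ S, x i ≤ 1 := by
    intro x hx
    have : rootPolytope n ⊆ {x | ∑ i ∈ S, x i ≤ 1} := by
      apply convexHull_min _ (convex_halfSpace_le hflin 1)
      rintro v ⟨a, b, hab, rfl⟩
      have := hroot S a b
      simp only [Set.mem_setOf_eq, this]
      split_ifs <;> norm_num
    exact this hx
  -- the special point
  have hv0mem : (Pi.single i0 1 - Pi.single j0 1 : Fin (n + 1) → ℝ) ∈ rootPolytope n :=
    subset_convexHull ℝ _ ⟨i0, j0, fun h => hj0 (h ▸ hi0), rfl⟩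
  have hv0sum : ∑ i ∈ S, (Pi.single i0 1 - Pi.single j0 1 : Fin (n + 1) → ℝ) i = 1 := by
    rw [hroot]; simp [hi0, hj0]
  have hgreat : IsGreatest ((fun x => ∑ i ∈ S, x i) '' rootPolytope n) 1 := by
    constructor
    · exact ⟨_, hv0mem, hv0sum⟩
    · rintro y ⟨x, hx, rfl⟩
      exact hub x hx
  -- identification of the vertex set of the face
  have hGset : {v ∈ rootVectors n | (fun x => ∑ i ∈ S, x i) v = 1}
      = {x | ∃ i ∈ S, ∃ j ∉ S, x = Pi.single i 1 - Pi.single j 1} := by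
    ext v
    constructor
    · rintro ⟨⟨a, b, hab, rfl⟩, hv⟩
      simp only at hv
      rw [hroot] at hv
      split_ifs at hv with h1 h2 h2 <;> first
        | exact ⟨a, h1, b, h2, rfl⟩
        | norm_num at hv
    · rintro ⟨a, ha, b, hb, rfl⟩
      refine ⟨⟨a, b, fun h => hb (h ▸ ha), rfl⟩, ?_⟩
      simp only
      rw [hroot]; simp [ha, hb]
  have hFace : {x ∈ rootPolytope n | ∑ i ∈ S, x i = 1}
      = convexHull ℝ {x | ∃ i ∈ S, ∃ j ∉ S, x = Pi.single i 1 - Pi.single j 1} := by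
    rw [← hGset]
    exact face_convexHull (rootVectors n) _ hflin 1
      (fun v hv => hub v (subset_convexHull ℝ _ hv))
  refine ⟨hgreat, hFace, ?_, ?_, ?_⟩
  -- exposedness
  · intro hne
    refine ⟨(hflin.mk' _).toContinuousLinearMap, ?_⟩
    ext x
    constructor
    · rintro ⟨hx, hx1⟩
      refine ⟨hx, fun y hy => ?_⟩
      simp only [LinearMap.coe_toContinuousLinearMap', IsLinearMap.mk'_apply]
      rw [hx1]
      exact hub y hy
    · rintro ⟨hx, hmax⟩
      refine ⟨hx, le_antisymm (hub x hx) ?_⟩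
      have := hmax _ hv0mem
      simp only [LinearMap.coe_toContinuousLinearMap', IsLinearMap.mk'_apply] at this
      rw [hv0sum] at this
      exact this
  -- dimension
  · rw [hFace, affineSpan_convexHull, direction_affineSpan]
    set G : Set (Fin (n + 1) → ℝ) :=
      {x | ∃ i ∈ S, ∃ j ∉ S, x = Pi.single i 1 - Pi.single j 1} with hG
    set L : (Fin (n + 1) → ℝ) →ₗ[ℝ] ℝ × ℝ :=
      LinearMap.prod (∑ i ∈ S, LinearMap.proj i) (∑ i ∈ Sᶜ, LinearMap.proj i) with hLdef
    have hL : ∀ v, L v = (∑ i ∈ S, v i, ∑ i ∈ Sᶜ, v i) := by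
      intro v
      simp [hLdef, LinearMap.sum_apply, LinearMap.proj_apply]
    have hLG : ∀ a ∈ G, L a = (1, -1) := by
      rintro a ⟨i, hi, j, hj, rfl⟩
      rw [hL]
      have h1 := hroot S i j
      have h2 := hroot Sᶜ i j
      rw [h1, h2]
      simp [hi, hj, Finset.mem_compl]
    have hspan : vectorSpan ℝ G = LinearMap.ker L := by
      apply le_antisymm
      · rw [vectorSpan_def, Submodule.span_le]
        rintro u ⟨a, ha, b, hb, rfl⟩
        simp only [SetLike.mem_coe, LinearMap.mem_ker, vsub_eq_sub, map_sub]
        rw [hLG a ha, hLG b hb, sub_self]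
      · intro v hv
        rw [LinearMap.mem_ker, hL, Prod.mk_eq_zero] at hv
        obtain ⟨hv1, hv2⟩ := hv
        have hsing : ∀ (a : Fin (n + 1)) (c : ℝ),
            c • (Pi.single a 1 : Fin (n + 1) → ℝ) = Pi.single a c := by
          intro a c
          funext x
          simp [Pi.single_apply, mul_ite]
        have h1 : ∀ (T : Finset (Fin (n + 1))) (p : Fin (n + 1)),
            ∑ i ∈ T, v i • (Pi.single i 1 - Pi.single p 1 : Fin (n + 1) → ℝ)
              = (∑ i ∈ T, Pi.single i (v i)) - (∑ i ∈ T, v i) • (Pi.single p 1 : Fin (n + 1) → ℝ) := by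
          intro T p
          rw [Finset.sum_smul, ← Finset.sum_sub_distrib]
          congr 1
          funext i
          rw [smul_sub, hsing]
        have key : v = ∑ i ∈ S, v i • (Pi.single i 1 - Pi.single i0 1 : Fin (n + 1) → ℝ)
            + ∑ j ∈ Sᶜ, v j • (Pi.single j 1 - Pi.single j0 1 : Fin (n + 1) → ℝ) := by
          rw [h1 S i0, h1 Sᶜ j0, hv1, hv2, zero_smul, zero_smul, sub_zero, sub_zero,
            Finset.sum_add_sum_compl, Finset.univ_sum_single]
        rw [key]
        apply Submodule.add_mem
        · apply Submodule.sum_mem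
          intro i hi
          apply Submodule.smul_mem
          have heq : (Pi.single i 1 - Pi.single i0 1 : Fin (n + 1) → ℝ)
              = (Pi.single i 1 - Pi.single j0 1 : Fin (n + 1) → ℝ)
                - (Pi.single i0 1 - Pi.single j0 1 : Fin (n + 1) → ℝ) := by
            abel
          rw [heq]
          exact vsub_mem_vectorSpan ℝ ⟨i, hi, j0, hj0, rfl⟩ ⟨i0, hi0, j0, hj0, rfl⟩
        · apply Submodule.sum_mem
          intro j hj
          rw [Finset.mem_compl] at hj
          apply Submodule.smul_mem
          have heq : (Pi.single j 1 - Pi.single j0 1 : Fin (n + 1) → ℝ)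
              = (Pi.single i0 1 - Pi.single j0 1 : Fin (n + 1) → ℝ)
                - (Pi.single i0 1 - Pi.single j 1 : Fin (n + 1) → ℝ) := by
            abel
          rw [heq]
          exact vsub_mem_vectorSpan ℝ ⟨i0, hi0, j0, hj0, rfl⟩ ⟨i0, hi0, j, hj, rfl⟩
    have hsurj : LinearMap.range L = ⊤ := by
      rw [LinearMap.range_eq_top]
      intro p
      refine ⟨p.1 • (Pi.single i0 1 : Fin (n + 1) → ℝ) + p.2 • (Pi.single j0 1 : Fin (n + 1) → ℝ), ?_⟩
      rw [map_add, map_smul, map_smul, hL, hL]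
      have hi0c : i0 ∉ Sᶜ := by simp [hi0]
      have hj0c : j0 ∈ Sᶜ := by simp [hj0]
      simp [Finset.sum_pi_single', hi0, hj0, hi0c, hj0c, Prod.ext_iff, Prod.smul_mk]
    have hrn := LinearMap.finrank_range_add_finrank_ker L
    rw [hsurj, finrank_top] at hrn
    have hdom : finrank ℝ (Fin (n + 1) → ℝ) = n + 1 := by
      simp [Module.finrank_pi]
    have hcod : finrank ℝ (ℝ × ℝ) = 2 := by
      simp
    rw [hdom, hcod] at hrn
    rw [hspan]
    omega
  -- injectivity
  · intro S' hS'ne hS'univ heq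
    have key : ∀ a b : Fin (n + 1), a ∈ S' → b ∉ S' → a ∈ S ∧ b ∉ S := by
      intro a b ha hb
      have hmem : (Pi.single a 1 - Pi.single b 1 : Fin (n + 1) → ℝ)
          ∈ {x ∈ rootPolytope n | ∑ i ∈ S', x i = 1} := by
        refine ⟨subset_convexHull ℝ _ ⟨a, b, fun h => hb (h ▸ ha), rfl⟩, ?_⟩
        rw [hroot]; simp [ha, hb]
      rw [heq] at hmem
      have h2 := hmem.2
      rw [hroot] at h2
      split_ifs at h2 with h1' h2' h2' <;> first
        | exact ⟨h1', h2'⟩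
        | norm_num at h2
    have key2 : ∀ a b : Fin (n + 1), a ∈ S → b ∉ S → a ∈ S' ∧ b ∉ S' := by
      intro a b ha hb
      have hmem : (Pi.single a 1 - Pi.single b 1 : Fin (n + 1) → ℝ)
          ∈ {x ∈ rootPolytope n | ∑ i ∈ S, x i = 1} := by
        refine ⟨subset_convexHull ℝ _ ⟨a, b, fun h => hb (h ▸ ha), rfl⟩, ?_⟩
        rw [hroot]; simp [ha, hb]
      rw [← heq] at hmem
      have h2 := hmem.2
      rw [hroot] at h2
      split_ifs at h2 with h1' h2' h2' <;> first
        | exact ⟨h1', h2'⟩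
        | norm_num at h2
    obtain ⟨b', hb'⟩ : ∃ b, b ∉ S' := by
      by_contra h
      push_neg at h
      exact hS'univ (Finset.eq_univ_iff_forall.2 h)
    ext i
    constructor
    · intro hi
      exact (key i b' hi hb').1
    · intro hi
      exact (key2 i j0 hi hj0).1
end

section
/- For n ≥ 1, if x ∈ P_{A_n} has all coordinates integers, then either x = 0 or x = e_i − e_j for some distinct i, j ∈ {0, 1, …, n}; i.e., the only lattice points of the root polytope P_{A_n} are its vertices and the origin. -/
lemma max_comb {a b u v : ℝ} (ha : 0 ≤ a) (hb : 0 ≤ b) :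
    max (a * u + b * v) 0 ≤ a * max u 0 + b * max v 0 := by
  refine max_le (add_le_add (mul_le_mul_of_nonneg_left (le_max_left _ _) ha)
    (mul_le_mul_of_nonneg_left (le_max_left _ _) hb)) ?_
  have h1 : 0 ≤ a * max u 0 := mul_nonneg ha (le_max_right _ _)
  have h2 : 0 ≤ b * max v 0 := mul_nonneg hb (le_max_right _ _)
  linarith

lemma hull_mem_S {n : ℕ} {x : Fin (n + 1) → ℝ} (hx : x ∈ rootPolytope n) :
    (∑ i, x i) = 0 ∧ (∑ i, max (x i) 0) ≤ 1 ∧ (∑ i, max (-(x i)) 0) ≤ 1 := by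
  set S : Set (Fin (n + 1) → ℝ) :=
    {y | (∑ i, y i) = 0 ∧ (∑ i, max (y i) 0) ≤ 1 ∧ (∑ i, max (-(y i)) 0) ≤ 1} with hS
  have hconv : Convex ℝ S := by
    intro p hp q hq a b ha hb hab
    obtain ⟨hp1, hp2, hp3⟩ := hp
    obtain ⟨hq1, hq2, hq3⟩ := hq
    refine ⟨?_, ?_, ?_⟩
    · simp only [Pi.add_apply, Pi.smul_apply, smul_eq_mul]
      rw [Finset.sum_add_distrib, ← Finset.mul_sum, ← Finset.mul_sum, hp1, hq1]
      ring
    · calc ∑ i, max ((a • p + b • q) i) 0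
          ≤ ∑ i, (a * max (p i) 0 + b * max (q i) 0) := by
            refine Finset.sum_le_sum fun i _ => ?_
            simpa using max_comb ha hb (u := p i) (v := q i)
        _ = a * ∑ i, max (p i) 0 + b * ∑ i, max (q i) 0 := by
            rw [Finset.sum_add_distrib, Finset.mul_sum, Finset.mul_sum]
        _ ≤ a * 1 + b * 1 :=
            add_le_add (mul_le_mul_of_nonneg_left hp2 ha) (mul_le_mul_of_nonneg_left hq2 hb)
        _ = 1 := by linarith
    · calc ∑ i, max (-((a • p + b • q) i)) 0
          ≤ ∑ i, (a * max (-(p i)) 0 + b * max (-(q i)) 0) := by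
            refine Finset.sum_le_sum fun i _ => ?_
            have := max_comb ha hb (u := -(p i)) (v := -(q i))
            simp only [Pi.add_apply, Pi.smul_apply, smul_eq_mul, neg_add, mul_neg] at this ⊢
            simpa [mul_neg] using this
        _ = a * ∑ i, max (-(p i)) 0 + b * ∑ i, max (-(q i)) 0 := by
            rw [Finset.sum_add_distrib, Finset.mul_sum, Finset.mul_sum]
        _ ≤ a * 1 + b * 1 :=
            add_le_add (mul_le_mul_of_nonneg_left hp3 ha) (mul_le_mul_of_nonneg_left hq3 hb)
        _ = 1 := by linarith
  have hsub : rootVectors n ⊆ S := by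
    rintro _ ⟨i, j, hij, rfl⟩
    have hpos : ∀ m, max ((Pi.single i 1 - Pi.single j 1 : Fin (n+1) → ℝ) m) 0 = (Pi.single i 1 : Fin (n+1) → ℝ) m := by
      intro m
      rcases eq_or_ne m i with rfl | hmi
      · simp [Pi.single_apply, hij.symm]
      · rcases eq_or_ne m j with rfl | hmj
        · simp [Pi.single_apply, hmi]
        · simp [Pi.single_apply, hmi, hmj]
    have hneg : ∀ m, max (-((Pi.single i 1 - Pi.single j 1 : Fin (n+1) → ℝ) m)) 0 = (Pi.single j 1 : Fin (n+1) → ℝ) m := by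
      intro m
      rcases eq_or_ne m i with rfl | hmi
      · simp [Pi.single_apply, hij.symm]
      · rcases eq_or_ne m j with rfl | hmj
        · simp [Pi.single_apply, hmi]
        · simp [Pi.single_apply, hmi, hmj]
    refine ⟨?_, ?_, ?_⟩
    · simp [Finset.sum_sub_distrib, Finset.sum_pi_single]
    · rw [Finset.sum_congr rfl fun m _ => hpos m]
      simp [Finset.sum_pi_single]
    · rw [Finset.sum_congr rfl fun m _ => hneg m]
      simp [Finset.sum_pi_single]
  exact convexHull_min hsub hconv hx

/-- The only lattice points of the root polytope `P_{A_n}` are its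
vertices `e_i − e_j` and the origin. -/
theorem specht_stmt_16 (n : ℕ) (hn : 1 ≤ n) (x : Fin (n + 1) → ℝ)
    (hx : x ∈ rootPolytope n) (hint : ∀ i, ∃ k : ℤ, x i = (k : ℝ)) :
    x = 0 ∨ ∃ i j : Fin (n + 1), i ≠ j ∧ x = Pi.single i 1 - Pi.single j 1 := by
  obtain ⟨h1, h2, h3⟩ := hull_mem_S hx
  choose k hk using hint
  simp only [hk] at h1 h2 h3
  have hk0 : ∑ i, k i = 0 := by exact_mod_cast h1
  have hP : ∑ i, max (k i) 0 ≤ 1 := by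
    have : ((∑ i, max (k i) 0 : ℤ) : ℝ) ≤ 1 := by push_cast; exact h2
    exact_mod_cast this
  have hN : ∑ i, max (-(k i)) 0 ≤ 1 := by
    have : ((∑ i, max (-(k i)) 0 : ℤ) : ℝ) ≤ 1 := by push_cast; exact h3
    exact_mod_cast this
  have hPN : ∑ i, max (k i) 0 - ∑ i, max (-(k i)) 0 = 0 := by
    rw [← Finset.sum_sub_distrib]
    rw [Finset.sum_congr rfl fun i _ => max_zero_sub_max_neg_zero_eq_self (k i)]
    exact hk0
  have hPnn : (0:ℤ) ≤ ∑ i, max (k i) 0 :=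
    Finset.sum_nonneg fun i _ => le_max_right _ _
  rcases (by omega : ∑ i, max (k i) 0 = 0 ∨ ∑ i, max (k i) 0 = 1) with h0 | hP1
  · -- all coordinates zero
    left
    have hz : ∀ m ∈ Finset.univ, max (k m) 0 = 0 :=
      (Finset.sum_eq_zero_iff_of_nonneg (fun i _ => le_max_right _ _)).mp h0
    have hz' : ∀ m ∈ Finset.univ, max (-(k m)) 0 = 0 :=
      (Finset.sum_eq_zero_iff_of_nonneg (fun i _ => le_max_right _ _)).mp (by omega)
    funext m
    have h1' := hz m (Finset.mem_univ m)
    have h2' := hz' m (Finset.mem_univ m)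
    have : k m = 0 := by
      have := le_max_left (k m) 0
      have := le_max_left (-(k m)) 0
      omega
    simp [hk, this]
  · right
    have hN1 : ∑ i, max (-(k i)) 0 = 1 := by omega
    -- find i with k i = 1
    have hex : ∃ i, 0 < max (k i) 0 := by
      by_contra hcon
      push_neg at hcon
      have : ∑ i, max (k i) 0 ≤ 0 := Finset.sum_nonpos fun i _ => hcon i
      omega
    obtain ⟨i, hi⟩ := hex
    have hipos : 0 < k i := by
      rcases lt_max_iff.mp hi with h | h
      · exact h
      · exact absurd h (lt_irrefl 0)
    have herase_nn : (0:ℤ) ≤ ∑ m ∈ Finset.univ.erase i, max (k m) 0 :=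
      Finset.sum_nonneg fun m _ => le_max_right _ _
    have hkerase : k i + ∑ m ∈ Finset.univ.erase i, max (k m) 0 = 1 := by
      have := Finset.add_sum_erase Finset.univ (fun m => max (k m) 0) (Finset.mem_univ i)
      rw [max_eq_left hipos.le] at this
      rw [this, hP1]
    have hki : k i = 1 := by omega
    have herase0 : ∑ m ∈ Finset.univ.erase i, max (k m) 0 = 0 := by omega
    have hrest : ∀ m, m ≠ i → k m ≤ 0 := by
      intro m hm
      have := (Finset.sum_eq_zero_iff_of_nonneg (fun m _ => le_max_right _ _)).mp herase0 m
        (Finset.mem_erase.mpr ⟨hm, Finset.mem_univ m⟩)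
      have := le_max_left (k m) 0
      omega
    -- find j with k j = -1
    have hex' : ∃ j, 0 < max (-(k j)) 0 := by
      by_contra hcon
      push_neg at hcon
      have : ∑ i, max (-(k i)) 0 ≤ 0 := Finset.sum_nonpos fun i _ => hcon i
      omega
    obtain ⟨j, hj⟩ := hex'
    have hjneg : k j < 0 := by
      rcases lt_max_iff.mp hj with h | h
      · omega
      · exact absurd h (lt_irrefl 0)
    have herase_nn' : (0:ℤ) ≤ ∑ m ∈ Finset.univ.erase j, max (-(k m)) 0 :=
      Finset.sum_nonneg fun m _ => le_max_right _ _
    have hkerase' : -(k j) + ∑ m ∈ Finset.univ.erase j, max (-(k m)) 0 = 1 := by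
      have := Finset.add_sum_erase Finset.univ (fun m => max (-(k m)) 0) (Finset.mem_univ j)
      rw [max_eq_left (by omega : (0:ℤ) ≤ -(k j))] at this
      rw [this, hN1]
    have hkj : k j = -1 := by omega
    have herase0' : ∑ m ∈ Finset.univ.erase j, max (-(k m)) 0 = 0 := by omega
    have hrest' : ∀ m, m ≠ j → 0 ≤ k m := by
      intro m hm
      have := (Finset.sum_eq_zero_iff_of_nonneg (fun m _ => le_max_right _ _)).mp herase0' m
        (Finset.mem_erase.mpr ⟨hm, Finset.mem_univ m⟩)
      have := le_max_left (-(k m)) 0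
      omega
    have hij : i ≠ j := by
      intro h; rw [h] at hki; omega
    refine ⟨i, j, hij, ?_⟩
    funext m
    have hxm : x m = (k m : ℝ) := hk m
    rcases eq_or_ne m i with rfl | hmi
    · simp [hxm, hki, Pi.single_apply, hij.symm]
    · rcases eq_or_ne m j with rfl | hmj
      · simp [hxm, hkj, Pi.single_apply, hmi]
      · have : k m = 0 := le_antisymm (hrest m hmi) (hrest' m hmj)
        simp [hxm, this, Pi.single_apply, hmi, hmj]
end
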